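/- Let (x_k) in ℝ^m converge to x̄, with ‖x_{k+1} − x_k‖ ≤ c₁ a_k where a_k ≥ 0 satisfy a_{k+1} ≤ (1/2) a_k for all k ≥ K and a_k ≤ c₂ a_{k−1}^{δ₂}, a_{k−1} ≤ ‖x_{k−1} − x̄‖. Then for all sufficiently large k, ‖x_k − x̄‖ ≤ 2 c₁ c₂ ‖x_{k−1} − x̄‖^{δ₂}. -/

import Mathlib

open Filter

/-- Superlinear convergence of the iterates: if `x_k → x̄`,
`‖x_{k+1} − x_k‖ ≤ c₁ a_k`, `a_{k+1} ≤ (1/2) a_k` for `k ≥ K`,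
`a_{k+1} ≤ c₂ a_k^{δ₂}` and `a_k ≤ ‖x_k − x̄‖`, then for all sufficiently
large `k`, `‖x_{k+1} − x̄‖ ≤ 2 c₁ c₂ ‖x_k − x̄‖^{δ₂}`. -/
theorem iterates_superlinear (m : ℕ) (c₁ c₂ δ₂ : ℝ) (K : ℕ)
    (x : ℕ → EuclideanSpace ℝ (Fin m)) (xbar : EuclideanSpace ℝ (Fin m)) (a : ℕ → ℝ)
    (hc₁ : 0 < c₁) (hc₂ : 0 < c₂) (hδ₂ : 1 < δ₂)
    (hpos : ∀ k, 0 ≤ a k)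
    (hconv : Tendsto x atTop (nhds xbar))
    (hstep : ∀ k, ‖x (k + 1) - x k‖ ≤ c₁ * a k)
    (hhalf : ∀ k, K ≤ k → a (k + 1) ≤ (1 / 2) * a k)
    (hrec : ∀ k, a (k + 1) ≤ c₂ * a k ^ δ₂)
    (hdist : ∀ k, a k ≤ ‖x k - xbar‖) :
    ∃ N : ℕ, ∀ k, N ≤ k → ‖x (k + 1) - xbar‖ ≤ 2 * c₁ * c₂ * ‖x k - xbar‖ ^ δ₂ := by
  refine ⟨K, fun k hk => ?_⟩
  have hgeo : ∀ n, K ≤ n → ∀ p, a (n + p) ≤ (1/2:ℝ)^p * a n := by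
    intro n hn p
    induction p with
    | zero => simp
    | succ p ih =>
      have h := hhalf (n + p) (le_trans hn (Nat.le_add_right _ _))
      have hp : (0:ℝ) ≤ (1/2:ℝ)^p := by positivity
      calc a (n + p + 1) ≤ (1/2) * a (n + p) := h
        _ ≤ (1/2) * ((1/2)^p * a n) := by nlinarith [ih]
        _ = (1/2:ℝ)^(p+1) * a n := by ring
  have key : ∀ n, K ≤ n → ‖x n - xbar‖ ≤ 2 * c₁ * a n := by
    intro n hn
    have hb : ∀ p, ‖x (n + p) - x n‖ ≤ c₁ * a n * (2 - 2 * (1/2:ℝ)^p) := by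
      intro p
      induction p with
      | zero => simp
      | succ p ih =>
        have h1 := hstep (n + p)
        have h2 := hgeo n hn p
        calc ‖x (n + p + 1) - x n‖
            ≤ ‖x (n + p + 1) - x (n + p)‖ + ‖x (n + p) - x n‖ :=
              norm_sub_le_norm_sub_add_norm_sub _ _ _
          _ ≤ c₁ * a (n + p) + c₁ * a n * (2 - 2 * (1/2:ℝ)^p) := add_le_add h1 ih
          _ ≤ c₁ * ((1/2:ℝ)^p * a n) + c₁ * a n * (2 - 2 * (1/2:ℝ)^p) := by
              nlinarith [h2, hc₁.le]
          _ = c₁ * a n * (2 - 2 * (1/2:ℝ)^(p+1)) := by ring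
    have hlim : Tendsto (fun p => ‖x (n + p) - x n‖) atTop (nhds ‖xbar - x n‖) := by
      have h1 : Tendsto (fun p => x (n + p)) atTop (nhds xbar) := by
        have := hconv.comp (tendsto_add_atTop_nat n)
        simpa [Function.comp_def, add_comm] using this
      exact (h1.sub_const (x n)).norm
    have h2 : ‖xbar - x n‖ ≤ 2 * c₁ * a n := by
      apply le_of_tendsto hlim
      filter_upwards with p
      have hp : (0:ℝ) ≤ (1/2:ℝ)^p := by positivity
      calc ‖x (n + p) - x n‖ ≤ c₁ * a n * (2 - 2 * (1/2:ℝ)^p) := hb p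
        _ ≤ 2 * c₁ * a n := by nlinarith [mul_nonneg (mul_nonneg hc₁.le (hpos n)) hp]
    rwa [norm_sub_rev] at h2
  have h1 : ‖x (k+1) - xbar‖ ≤ 2 * c₁ * a (k+1) := key (k+1) (hk.trans (Nat.le_succ k))
  have h2 : a (k+1) ≤ c₂ * a k ^ δ₂ := hrec k
  have h3 : a k ^ δ₂ ≤ ‖x k - xbar‖ ^ δ₂ :=
    Real.rpow_le_rpow (hpos k) (hdist k) (by linarith)
  calc ‖x (k+1) - xbar‖ ≤ 2 * c₁ * a (k+1) := h1
    _ ≤ 2 * c₁ * (c₂ * a k ^ δ₂) := by nlinarith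
    _ ≤ 2 * c₁ * c₂ * ‖x k - xbar‖ ^ δ₂ := by nlinarith [mul_le_mul_of_nonneg_left h3 (by positivity : (0:ℝ) ≤ 2 * c₁ * c₂)]
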